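/- Define, for nonempty ideal sets I, J of S = M^1_{\geq 0} \times \cdots \times M^d_{\geq 0} \subseteq \mathbb{R}^d, dist(I,J) = inf { \varepsilon > 0 : (\forall \gamma \in I \exists \delta \in J, |\gamma - \delta| < \varepsilon) and (\forall \delta \in J \exists \gamma \in I, |\gamma - \delta| < \varepsilon) } (Euclidean norm). Then dist is a metric on the set of nonempty finitely generated ideal sets of S: it is real-valued and nonnegative, symmetric, satisfies the triangle inequality, and dist(I,J) = 0 implies I = J. -/
import Mathlib


/-- The semigroup `S = M^1_{≥0} × ⋯ × M^d_{≥0}`, realized as a subset of `Fin d → ℝ`. -/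
def Sset {d : ℕ} (M : Fin d → AddSubgroup ℝ) : Set (Fin d → ℝ) :=
  {s | ∀ i, s i ∈ M i ∧ 0 ≤ s i}

/-- The "monomial ideal set" (up-set) generated by `T ⊆ S`. -/
def Up {d : ℕ} (M : Fin d → AddSubgroup ℝ) (T : Set (Fin d → ℝ)) : Set (Fin d → ℝ) :=
  {s | ∃ t ∈ T, ∃ u ∈ Sset M, s = t + u}

/-- An ideal set of `S`: a subset of `S` closed under adding arbitrary elements of `S`. -/
def IsIdealSet {d : ℕ} (M : Fin d → AddSubgroup ℝ) (I : Set (Fin d → ℝ)) : Prop :=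
  I ⊆ Sset M ∧ ∀ s ∈ I, ∀ u ∈ Sset M, s + u ∈ I

/-- The m-prime ideal set `Q_T = {s ∈ S | s i > 0 for some i ∈ T}`. -/
def QT {d : ℕ} (M : Fin d → AddSubgroup ℝ) (T : Finset (Fin d)) : Set (Fin d → ℝ) :=
  {s ∈ Sset M | ∃ i ∈ T, 0 < s i}

/-- An m-prime ideal set: a proper ideal set `P` with `f + g ∈ P → f ∈ P ∨ g ∈ P`. -/
def IsMPrime {d : ℕ} (M : Fin d → AddSubgroup ℝ) (P : Set (Fin d → ℝ)) : Prop :=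
  IsIdealSet M P ∧ P ≠ Sset M ∧
    ∀ f ∈ Sset M, ∀ g ∈ Sset M, f + g ∈ P → f ∈ P ∨ g ∈ P

/-- An m-irreducible ideal set. -/
def MIrred {d : ℕ} (M : Fin d → AddSubgroup ℝ) (I : Set (Fin d → ℝ)) : Prop :=
  IsIdealSet M I ∧ I ≠ Sset M ∧
    ∀ J K : Set (Fin d → ℝ), IsIdealSet M J → IsIdealSet M K → I = J ∩ K → I = J ∨ I = K

/-- Monomial Krull dimension: `sup {d - |T| : Q_T ⊇ I}` (m-primes are exactly the `Q_T`). -/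
noncomputable def mdim {d : ℕ} (M : Fin d → AddSubgroup ℝ) (I : Set (Fin d → ℝ)) : ℕ :=
  sSup {n : ℕ | ∃ T : Finset (Fin d), I ⊆ QT M T ∧ n = d - T.card}

/-- Euclidean distance between exponent vectors. -/
noncomputable def myDist {d : ℕ} (γ δ : Fin d → ℝ) : ℝ :=
  Real.sqrt (∑ i, (γ i - δ i) ^ 2)

/-- `dist(I,J) < ε` in the sense of Definition 4.5 of the paper. -/
def DistLT {d : ℕ} (ε : ℝ) (I J : Set (Fin d → ℝ)) : Prop :=
  (∀ γ ∈ I, ∃ δ ∈ J, myDist γ δ < ε) ∧ (∀ δ ∈ J, ∃ γ ∈ I, myDist γ δ < ε)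

/-- Distance between ideal sets (Definition 4.6). -/
noncomputable def idealDist {d : ℕ} (I J : Set (Fin d → ℝ)) : ℝ :=
  sInf {ε : ℝ | 0 < ε ∧ DistLT ε I J}

/-- Finitely generated ideal set. -/
def IsFG {d : ℕ} (M : Fin d → AddSubgroup ℝ) (I : Set (Fin d → ℝ)) : Prop :=
  ∃ G : Finset (Fin d → ℝ), ↑G ⊆ Sset M ∧ I = Up M ↑G


section Helpers

variable {d : ℕ}

lemma myDist_eq (γ δ : Fin d → ℝ) :
    myDist γ δ = dist ((WithLp.equiv 2 (Fin d → ℝ)).symm γ)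
      ((WithLp.equiv 2 (Fin d → ℝ)).symm δ) := by
  rw [EuclideanSpace.dist_eq]
  unfold myDist
  congr 1
  refine Finset.sum_congr rfl fun i _ => ?_
  rw [Real.dist_eq, sq_abs]
  rfl

lemma myDist_self (γ : Fin d → ℝ) : myDist γ γ = 0 := by
  simp [myDist]

lemma myDist_symm (γ δ : Fin d → ℝ) : myDist γ δ = myDist δ γ := by
  unfold myDist
  congr 1
  exact Finset.sum_congr rfl fun i _ => by ring

lemma myDist_triangle (γ δ κ : Fin d → ℝ) :
    myDist γ κ ≤ myDist γ δ + myDist δ κ := by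
  rw [myDist_eq, myDist_eq, myDist_eq]
  exact dist_triangle _ _ _

lemma myDist_coord (γ δ : Fin d → ℝ) (i : Fin d) :
    |γ i - δ i| ≤ myDist γ δ := by
  have h1 : (γ i - δ i) ^ 2 ≤ ∑ j, (γ j - δ j) ^ 2 :=
    Finset.single_le_sum (f := fun j => (γ j - δ j) ^ 2)
      (fun j _ => sq_nonneg _) (Finset.mem_univ i)
  calc |γ i - δ i| = Real.sqrt ((γ i - δ i) ^ 2) := (Real.sqrt_sq_eq_abs _).symm
    _ ≤ myDist γ δ := Real.sqrt_le_sqrt h1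

lemma myDist_add_self (γ u : Fin d → ℝ) :
    myDist γ (u + γ) = Real.sqrt (∑ i, (u i) ^ 2) := by
  unfold myDist
  congr 1
  refine Finset.sum_congr rfl fun i _ => ?_
  simp only [Pi.add_apply]
  ring

lemma distSet_nonempty {M : Fin d → AddSubgroup ℝ} {I J : Set (Fin d → ℝ)}
    (hI : IsIdealSet M I) (hJ : IsIdealSet M J)
    (hIne : I.Nonempty) (hJne : J.Nonempty) :
    {ε : ℝ | 0 < ε ∧ DistLT ε I J}.Nonempty := by
  obtain ⟨i₀, hi₀⟩ := hIne
  obtain ⟨j₀, hj₀⟩ := hJne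
  set A := Real.sqrt (∑ i, (i₀ i) ^ 2) with hA
  set B := Real.sqrt (∑ i, (j₀ i) ^ 2) with hB
  have hA0 : 0 ≤ A := Real.sqrt_nonneg _
  have hB0 : 0 ≤ B := Real.sqrt_nonneg _
  refine ⟨A + B + 1, by linarith, ?_, ?_⟩
  · intro γ hγ
    refine ⟨j₀ + γ, hJ.2 j₀ hj₀ γ (hI.1 hγ), ?_⟩
    rw [myDist_add_self]
    linarith
  · intro δ hδ
    refine ⟨i₀ + δ, hI.2 i₀ hi₀ δ (hJ.1 hδ), ?_⟩
    rw [myDist_symm, myDist_add_self]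
    linarith

lemma mem_of_approx {M : Fin d → AddSubgroup ℝ} (H : Finset (Fin d → ℝ))
    (hH : ↑H ⊆ Sset M) {γ : Fin d → ℝ} (hγ : γ ∈ Sset M)
    (happ : ∀ ε > (0:ℝ), ∃ δ ∈ Up M ↑H, myDist γ δ < ε) :
    γ ∈ Up M ↑H := by
  have hHne : H.Nonempty := by
    obtain ⟨δ, hδ, -⟩ := happ 1 one_pos
    obtain ⟨t, ht, -⟩ := hδ
    exact ⟨t, ht⟩
  have claim : ∃ h ∈ H, ∀ ε > (0:ℝ), ∃ u ∈ Sset M, myDist γ (h + u) < ε := by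
    by_contra hc
    push_neg at hc
    choose f hf0 hf using hc
    set g : (Fin d → ℝ) → ℝ := fun h => if hh : h ∈ H then f h hh else 1 with hg
    have hε0 : 0 < H.inf' hHne g := by
      rw [Finset.lt_inf'_iff]
      intro b hb
      simp only [hg, dif_pos hb]
      exact hf0 b hb
    obtain ⟨δ, hδJ, hδd⟩ := happ _ hε0
    obtain ⟨t, htH, u, hu, rfl⟩ := hδJ
    have htH' : t ∈ H := htH
    have h1 := hf t htH' u hu
    have h2 : H.inf' hHne g ≤ g t := Finset.inf'_le g htH'
    rw [hg] at h2
    simp only [dif_pos htH'] at h2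
    linarith
  obtain ⟨h, hhH, hap⟩ := claim
  have hhS : h ∈ Sset M := hH hhH
  have hge : ∀ i, h i ≤ γ i := by
    intro i
    by_contra hlt
    push_neg at hlt
    have hc : 0 < h i - γ i := by linarith
    obtain ⟨u, hu, hd⟩ := hap _ hc
    have hcoord : |γ i - (h + u) i| ≤ myDist γ (h + u) := myDist_coord _ _ i
    have hui : 0 ≤ u i := (hu i).2
    have hx : -(γ i - (h + u) i) ≤ |γ i - (h + u) i| := neg_le_abs _
    simp only [Pi.add_apply] at hx hcoord
    linarith
  refine ⟨h, hhH, γ - h, ?_, by ring⟩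
  intro i
  exact ⟨sub_mem (hγ i).1 (hhS i).1, sub_nonneg.2 (hge i)⟩

lemma DistLT_mono {ε ε' : ℝ} {I J : Set (Fin d → ℝ)} (h : DistLT ε I J)
    (hle : ε ≤ ε') : DistLT ε' I J := by
  refine ⟨fun γ hγ => ?_, fun δ hδ => ?_⟩
  · obtain ⟨δ, hδ, hd⟩ := h.1 γ hγ
    exact ⟨δ, hδ, lt_of_lt_of_le hd hle⟩
  · obtain ⟨γ, hγ, hd⟩ := h.2 δ hδ
    exact ⟨γ, hγ, lt_of_lt_of_le hd hle⟩

end Helpers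

/-- `idealDist` is a metric on nonempty finitely generated ideal sets
(Theorem tmetric). -/
theorem stmt14 (d : ℕ) (M : Fin d → AddSubgroup ℝ) (hM : ∀ i, M i ≠ ⊥)
    (I J K : Set (Fin d → ℝ))
    (hI : IsIdealSet M I) (hJ : IsIdealSet M J) (hK : IsIdealSet M K)
    (hIfg : IsFG M I) (hJfg : IsFG M J) (hKfg : IsFG M K)
    (hIne : I.Nonempty) (hJne : J.Nonempty) (hKne : K.Nonempty) :
    {ε : ℝ | 0 < ε ∧ DistLT ε I J}.Nonempty ∧
    0 ≤ idealDist I J ∧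
    idealDist I I = 0 ∧
    idealDist I J = idealDist J I ∧
    idealDist I K ≤ idealDist I J + idealDist J K ∧
    (idealDist I J = 0 → I = J) := by
  have bdd : ∀ (A B : Set (Fin d → ℝ)), BddBelow {ε : ℝ | 0 < ε ∧ DistLT ε A B} :=
    fun A B => ⟨0, fun x hx => hx.1.le⟩
  have hneIJ := distSet_nonempty hI hJ hIne hJne
  have hneJK := distSet_nonempty hJ hK hJne hKne
  have hneIK := distSet_nonempty hI hK hIne hKne
  have nonneg : ∀ (A B : Set (Fin d → ℝ)), 0 ≤ idealDist A B := by
    intro A B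
    exact Real.sInf_nonneg (fun x hx => hx.1.le)
  refine ⟨hneIJ, nonneg I J, ?_, ?_, ?_, ?_⟩
  · -- idealDist I I = 0
    have hsub : ∀ ε > (0:ℝ), ε ∈ {ε : ℝ | 0 < ε ∧ DistLT ε I I} := by
      intro ε hε
      refine ⟨hε, fun γ hγ => ⟨γ, hγ, by rw [myDist_self]; exact hε⟩,
        fun δ hδ => ⟨δ, hδ, by rw [myDist_self]; exact hε⟩⟩
    refine le_antisymm ?_ (nonneg I I)
    by_contra hpos
    push_neg at hpos
    have := csInf_le (bdd I I) (hsub (idealDist I I / 2) (by linarith))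
    unfold idealDist at hpos this
    linarith
  · -- symmetry
    unfold idealDist
    congr 1
    ext ε
    constructor
    · rintro ⟨hε, h1, h2⟩
      refine ⟨hε, fun γ hγ => ?_, fun δ hδ => ?_⟩
      · obtain ⟨x, hx, hd⟩ := h2 γ hγ
        exact ⟨x, hx, by rwa [myDist_symm]⟩
      · obtain ⟨x, hx, hd⟩ := h1 δ hδ
        exact ⟨x, hx, by rwa [myDist_symm]⟩
    · rintro ⟨hε, h1, h2⟩
      refine ⟨hε, fun γ hγ => ?_, fun δ hδ => ?_⟩
      · obtain ⟨x, hx, hd⟩ := h2 γ hγ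
        exact ⟨x, hx, by rwa [myDist_symm]⟩
      · obtain ⟨x, hx, hd⟩ := h1 δ hδ
        exact ⟨x, hx, by rwa [myDist_symm]⟩
  · -- triangle
    have key : ∀ ε₁ ∈ {ε : ℝ | 0 < ε ∧ DistLT ε I J},
        ∀ ε₂ ∈ {ε : ℝ | 0 < ε ∧ DistLT ε J K},
        idealDist I K ≤ ε₁ + ε₂ := by
      rintro ε₁ ⟨hε₁, h1, h2⟩ ε₂ ⟨hε₂, h3, h4⟩
      refine csInf_le (bdd I K) ⟨by linarith, fun γ hγ => ?_, fun κ hκ => ?_⟩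
      · obtain ⟨δ, hδ, hd1⟩ := h1 γ hγ
        obtain ⟨κ, hκ, hd2⟩ := h3 δ hδ
        exact ⟨κ, hκ, lt_of_le_of_lt (myDist_triangle γ δ κ) (by linarith)⟩
      · obtain ⟨δ, hδ, hd2⟩ := h4 κ hκ
        obtain ⟨γ, hγ, hd1⟩ := h2 δ hδ
        exact ⟨γ, hγ, lt_of_le_of_lt (myDist_triangle γ δ κ) (by linarith)⟩
    have step : ∀ ε₂ ∈ {ε : ℝ | 0 < ε ∧ DistLT ε J K},
        idealDist I K ≤ idealDist I J + ε₂ := by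
      intro ε₂ hε₂
      have : idealDist I K - ε₂ ≤ idealDist I J :=
        le_csInf hneIJ (fun ε₁ hε₁ => by linarith [key ε₁ hε₁ ε₂ hε₂])
      linarith
    have : idealDist I K - idealDist I J ≤ idealDist J K :=
      le_csInf hneJK (fun ε₂ hε₂ => by linarith [step ε₂ hε₂])
    linarith
  · -- zero implies equal
    intro h0
    have hall : ∀ ε > (0:ℝ), DistLT ε I J := by
      intro ε hε
      have : sInf {ε : ℝ | 0 < ε ∧ DistLT ε I J} < ε := by
        unfold idealDist at h0; rw [h0]; exact hε
      obtain ⟨x, hx, hxε⟩ := (csInf_lt_iff (bdd I J) hneIJ).1 this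
      exact DistLT_mono hx.2 hxε.le
    obtain ⟨GI, hGI, hIeq⟩ := hIfg
    obtain ⟨GJ, hGJ, hJeq⟩ := hJfg
    ext γ
    constructor
    · intro hγ
      rw [hJeq]
      exact mem_of_approx GJ hGJ (hI.1 hγ)
        (fun ε hε => by rw [← hJeq]; exact (hall ε hε).1 γ hγ)
    · intro hγ
      rw [hIeq]
      refine mem_of_approx GI hGI (hJ.1 hγ) (fun ε hε => ?_)
      rw [← hIeq]
      obtain ⟨x, hx, hd⟩ := (hall ε hε).2 γ hγ
      exact ⟨x, hx, by rwa [myDist_symm]⟩
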